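/- Let p be a complex polynomial of degree n with p(1) ≠ 0. The number of zeros of p (counted with multiplicity) lying on the unit circle equals the number of real zeros (counted with multiplicity) of the transformed polynomial q_μ(X) = Σ p_k (X - i)^k (X + i)^{n-k}. -/

import Mathlib

open Complex Polynomial

/-- The Cayley-transformed polynomial `q_μ(X) = Σ p_k (X - i)^k (X + i)^{n-k}`. -/
noncomputable def qMu (p : ℂ[X]) (n : ℕ) : ℂ[X] :=
  ∑ k ∈ Finset.range (n + 1), C (p.coeff k) * (X - C I) ^ k * (X + C I) ^ (n - k)

theorem qMu_count_circle (p : ℂ[X]) (n : ℕ) (hp : p ≠ 0) (hn : p.natDegree = n)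
    (h1 : p.eval 1 ≠ 0) :
    (p.roots.filter fun z => ‖z‖ = 1).card =
      ((qMu p n).roots.filter fun z => z.im = 0).card := by
  have hc : p.leadingCoeff ≠ 0 := leadingCoeff_ne_zero.mpr hp
  have hsplits : p.Splits := IsAlgClosed.splits p
  have hfact : p = C p.leadingCoeff * (p.roots.map fun r => X - C r).prod :=
    hsplits.eq_prod_roots
  have hcard : p.roots.card = n := by
    rw [← hn]; exact (splits_iff_card_roots.mp hsplits)
  have hroots1 : ∀ r ∈ p.roots, r ≠ 1 := by
    intro r hr h
    exact h1 (by simpa [h] using isRoot_of_mem_roots hr)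
  set g : ℂ → ℂ := fun r => I * (1 + r) / (1 - r) with hg
  set f : ℂ → ℂ[X] := fun r => (X - C I) - C r * (X + C I) with hf
  -- Step 1: qMu p n = C lead * ∏ f r
  have hT : qMu p n = C p.leadingCoeff * (p.roots.map f).prod := by
    apply eq_of_infinite_eval_eq
    apply Set.Infinite.mono (s := {(-I)}ᶜ)
    swap
    · exact (Set.finite_singleton (-I)).infinite_compl
    intro x hx
    have hxi : x + I ≠ 0 := by
      intro h; exact hx (by simp [eq_neg_of_add_eq_zero_left h])
    set z := (x - I) / (x + I) with hz
    show eval x (qMu p n) = eval x _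
    have heval : ∀ k ≤ n, (x - I) ^ k * (x + I) ^ (n - k) = z ^ k * (x + I) ^ n := by
      intro k hk
      have hxk : (x + I) ^ k ≠ 0 := pow_ne_zero k hxi
      rw [hz, div_pow, div_mul_eq_mul_div, eq_div_iff hxk, mul_assoc, ← pow_add,
        Nat.sub_add_cancel hk]
    have hL : eval x (qMu p n) = (x + I) ^ n * eval z p := by
      rw [qMu, eval_finset_sum]
      rw [eval_eq_sum_range, hn, Finset.mul_sum]
      apply Finset.sum_congr rfl
      intro k hk
      have hk' : k ≤ n := Nat.lt_succ_iff.mp (Finset.mem_range.mp hk)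
      simp only [eval_mul, eval_pow, eval_sub, eval_add, eval_X, eval_C]
      rw [mul_assoc, heval k hk']
      ring
    have hR : eval x (C p.leadingCoeff * (p.roots.map f).prod)
        = (x + I) ^ n * eval z p := by
      rw [eval_mul, eval_C, eval_multiset_prod, Multiset.map_map]
      have : ∀ r ∈ p.roots, (eval x ∘ f) r = (x + I) * (z - r) := by
        intro r _
        simp only [Function.comp_apply, hf, eval_sub, eval_mul, eval_add, eval_X, eval_C]
        rw [hz]
        field_simp
      rw [Multiset.map_congr rfl this, Multiset.prod_map_mul]
      rw [Multiset.map_const', Multiset.prod_replicate, hcard]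
      conv_rhs => rw [hfact]
      rw [eval_mul, eval_C, eval_multiset_prod, Multiset.map_map]
      simp only [Function.comp_apply, eval_sub, eval_X, eval_C]
      ring
    rw [hL, hR]
  -- Step 2: factor each f r into linear form with root g r
  have hfr : ∀ r ∈ p.roots, f r = C (1 - r) * (X - C (g r)) := by
    intro r hr
    have h1r : (1 : ℂ) - r ≠ 0 := sub_ne_zero.mpr (Ne.symm (hroots1 r hr))
    have key : (1 - r) * g r = I * (1 + r) := by
      rw [hg]; field_simp
    rw [hf]
    simp only
    rw [mul_sub, ← C_mul, key]
    simp only [map_mul, map_add, map_sub, map_one]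
    ring
  have hT2 : qMu p n = C (p.leadingCoeff * (p.roots.map fun r => 1 - r).prod) *
      (p.roots.map fun r => X - C (g r)).prod := by
    rw [hT, Multiset.map_congr rfl hfr, Multiset.prod_map_mul,
      show (Multiset.map (fun x => C (1 - x)) p.roots)
          = Multiset.map C (Multiset.map (fun r => 1 - r) p.roots) from
        (Multiset.map_map C _ _).symm,
      ← map_multiset_prod, ← mul_assoc, ← C_mul]
  have hd : p.leadingCoeff * (p.roots.map fun r => 1 - r).prod ≠ 0 := by
    apply mul_ne_zero hc
    apply Multiset.prod_ne_zero
    intro h0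
    obtain ⟨r, hr, hr0⟩ := Multiset.mem_map.mp h0
    exact sub_ne_zero.mpr (Ne.symm (hroots1 r hr)) hr0
  have hroots : (qMu p n).roots = p.roots.map g := by
    rw [hT2, roots_C_mul _ hd,
      show (Multiset.map (fun r => X - C (g r)) p.roots)
          = Multiset.map (fun a => X - C a) (Multiset.map g p.roots) from
        (by rw [Multiset.map_map]; rfl),
      roots_multiset_prod_X_sub_C]
  rw [hroots, Multiset.filter_map, Multiset.card_map]
  apply congrArg
  apply Multiset.filter_congr
  intro r hr
  have h1r : (1 : ℂ) - r ≠ 0 := sub_ne_zero.mpr (Ne.symm (hroots1 r hr))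
  have hns : Complex.normSq (1 - r) ≠ 0 := by
    simpa [Complex.normSq_eq_zero] using h1r
  have him : (g r).im = (1 - (r.re ^ 2 + r.im ^ 2)) / Complex.normSq (1 - r) := by
    rw [hg]
    simp only
    rw [Complex.div_im]
    simp only [Complex.mul_im, Complex.mul_re, Complex.I_re, Complex.I_im, Complex.add_re,
      Complex.add_im, Complex.sub_re, Complex.sub_im, Complex.one_re, Complex.one_im]
    rw [div_sub_div_same]
    congr 1
    ring
  simp only [Function.comp_apply]
  rw [him]
  constructor
  · intro h
    have hsq : r.re ^ 2 + r.im ^ 2 = 1 := by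
      have h2 : Complex.normSq r = 1 := by
        rw [← Complex.sq_norm, h]; norm_num
      rw [Complex.normSq_apply] at h2
      nlinarith
    rw [hsq]
    simp
  · intro h
    rcases div_eq_zero_iff.mp h with h' | h'
    · have hsq : Complex.normSq r = 1 := by
        rw [Complex.normSq_apply]; nlinarith
      rw [Complex.norm_def, hsq, Real.sqrt_one]
    · exact absurd h' hns
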